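/- arXiv:1910.06531 — 6 statements merged into one kernel-verified Lean document; each statement's English description precedes it below -/
import Mathlib

section
/- Let (S, η', μ') and (T, η, μ) be monads on a category A. Suppose λ_a : STa → TSa is a family of arrows (not assumed natural) satisfying: (i) λ_a ∘ S(η_a) = η_{Sa} and λ_a ∘ η'_{Ta} = T(η'_a) for all a; and (ii) λ_b ∘ S(f^T) = (λ_b ∘ Sf)^T ∘ λ_a for every f : a → Tb, where f^T := μ_b ∘ Tf. Then λ is automatically a natural transformation ST ⇒ TS; that is, λ_d ∘ ST(h) = TS(h) ∘ λ_c for every h : c → d. -/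
open CategoryTheory

universe v u

/-- A family `λ_a : STa ⟶ TSa` (not assumed natural) which is compatible with both units and
with the extension operation of `T` is automatically a natural transformation `ST ⇒ TS`. -/
theorem stmt8 {A : Type u} [Category.{v} A] (S T : Monad A)
    (l : ∀ a : A, S.obj (T.obj a) ⟶ T.obj (S.obj a))
    (hη : ∀ a : A, S.map (T.η.app a) ≫ l a = T.η.app (S.obj a))
    (hη' : ∀ a : A, S.η.app (T.obj a) ≫ l a = T.map (S.η.app a))
    (hext : ∀ {a b : A} (f : a ⟶ T.obj b),
      S.map (T.map f ≫ T.μ.app b) ≫ l b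
        = l a ≫ T.map (S.map f ≫ l b) ≫ T.μ.app (S.obj b))
    {c d : A} (h : c ⟶ d) :
    S.map (T.map h) ≫ l d = l c ≫ T.map (S.map h) := by
  have key := hext (h ≫ T.η.app d)
  have e1 : T.map (h ≫ T.η.app d) ≫ T.μ.app d = T.map h := by
    rw [T.map_comp, Category.assoc, T.right_unit]
    simp
  rw [e1] at key
  rw [key, S.map_comp, Category.assoc, hη d]
  have : T.map (S.map h ≫ T.η.app (S.obj d)) ≫ T.μ.app (S.obj d) = T.map (S.map h) := by
    rw [T.map_comp, Category.assoc, T.right_unit]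
    simp
  rw [this]
end

section
/- In a 2-category K, given 1-cells s : a → b (so arrows configured as s : a → b, t : b → c, u : a → c), left pasting operators (-)^# : K(x,b)(-, s·-) → K(x,c)(t·-, u·-) — families of functions K(x,b)(f, sg) → K(x,c)(tf, ug) respecting whiskering (θ^# h = (θh)^#) and blistering ((θ · κ)^# = θ^# · tκ) — are in bijective correspondence with 2-cells ts ⇒ u, via (-)^# ↦ (1_s)^#. Moreover every left pasting operator satisfies θ^# = (1_s)^# g · tθ for θ : f ⇒ sg. -/
open CategoryTheory Bicategory

universe w v u

/-- A left pasting operator for `s : a ⟶ b`, `t : b ⟶ c`, `u : a ⟶ c` in a 2-category: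
a family of functions sending a 2-cell `θ : f ⇒ sg` to a 2-cell `θ^# : tf ⇒ ug`,
respecting whiskering and blistering. -/
structure LeftPastingOperator {K : Type u} [Bicategory.{w, v} K] [Bicategory.Strict K]
    {a b c : K} (s : a ⟶ b) (t : b ⟶ c) (u : a ⟶ c) where
  op : ∀ {x : K} {f : x ⟶ b} {g : x ⟶ a}, (f ⟶ g ≫ s) → (f ≫ t ⟶ g ≫ u)
  whisker : ∀ {x z : K} (h : z ⟶ x) {f : x ⟶ b} {g : x ⟶ a} (θ : f ⟶ g ≫ s),
    op ((h ◁ θ) ≫ (α_ h g s).inv)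
      = (α_ h f t).hom ≫ (h ◁ op θ) ≫ (α_ h g u).inv
  blister : ∀ {x : K} {f f' : x ⟶ b} {g : x ⟶ a} (κ : f' ⟶ f) (θ : f ⟶ g ≫ s),
    op (κ ≫ θ) = (κ ▷ t) ≫ op θ

section Aux

variable {K : Type u} [Bicategory.{w, v} K] [Bicategory.Strict K]
    {a b c : K} {s : a ⟶ b} {t : b ⟶ c} {u : a ⟶ c}

theorem LeftPastingOperator.op_eqToHom (P : LeftPastingOperator s t u) {x : K} {f : x ⟶ b}
    {g₁ g₂ : x ⟶ a} (h : g₁ = g₂) (θ : f ⟶ g₁ ≫ s) :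
    P.op (θ ≫ eqToHom (by rw [h])) = P.op θ ≫ eqToHom (by rw [h]) := by
  subst h; simp

theorem LeftPastingOperator.key (P : LeftPastingOperator s t u) {x : K} {f : x ⟶ b} {g : x ⟶ a}
    (θ : f ⟶ g ≫ s) :
    P.op θ = (θ ▷ t) ≫ (α_ g s t).hom
      ≫ (g ◁ (P.op ((λ_ s).inv) ≫ (λ_ u).hom)) := by
  have hb := P.blister θ (𝟙 (g ≫ s))
  rw [Category.comp_id] at hb
  have he := P.op_eqToHom (Category.comp_id g).symm (𝟙 (g ≫ s))
  have harg : (𝟙 (g ≫ s)) ≫ eqToHom (show g ≫ s = (g ≫ 𝟙 a) ≫ s by simp)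
      = (g ◁ (λ_ s).inv) ≫ (α_ g (𝟙 a) s).inv := by
    simp [Bicategory.Strict.leftUnitor_eqToIso, Bicategory.Strict.associator_eqToIso]
  rw [harg, P.whisker g ((λ_ s).inv)] at he
  have he2 : P.op (𝟙 (g ≫ s))
      = ((α_ g s t).hom ≫ (g ◁ P.op ((λ_ s).inv)) ≫ (α_ g (𝟙 a) u).inv)
        ≫ eqToHom (show (g ≫ 𝟙 a) ≫ u = g ≫ u by simp) := by
    rw [he]; simp
  rw [hb, he2]
  simp [Bicategory.Strict.leftUnitor_eqToIso, Bicategory.Strict.associator_eqToIso,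
    Bicategory.whiskerLeft_comp]

end Aux

/-- Left pasting operators are in bijective correspondence with 2-cells `ts ⇒ u`,
via `(-)^# ↦ (1_s)^#`; moreover every left pasting operator satisfies
`θ^# = (1_s)^# g · tθ`. -/
theorem stmt11 {K : Type u} [Bicategory.{w, v} K] [Bicategory.Strict K]
    {a b c : K} (s : a ⟶ b) (t : b ⟶ c) (u : a ⟶ c) :
    ∃ e : LeftPastingOperator s t u ≃ (s ≫ t ⟶ u),
      (∀ P : LeftPastingOperator s t u,
        e P = P.op ((λ_ s).inv) ≫ (λ_ u).hom) ∧
      (∀ (P : LeftPastingOperator s t u) {x : K} {f : x ⟶ b} {g : x ⟶ a}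
        (θ : f ⟶ g ≫ s),
        P.op θ = (θ ▷ t) ≫ (α_ g s t).hom
          ≫ (g ◁ (P.op ((λ_ s).inv) ≫ (λ_ u).hom))) := by
  refine ⟨⟨fun P => P.op ((λ_ s).inv) ≫ (λ_ u).hom,
    fun φ => ⟨fun {x f g} θ => (θ ▷ t) ≫ (α_ g s t).hom ≫ (g ◁ φ), ?_, ?_⟩, ?_, ?_⟩, fun P => rfl,
    fun P {x f g} θ => P.key θ⟩
  · intro x z h f g θ
    simp [Bicategory.Strict.associator_eqToIso]
  · intro x f f' g κ θ
    simp
  · intro P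
    have hk : ∀ {x : K} {f : x ⟶ b} {g : x ⟶ a} (θ : f ⟶ g ≫ s),
        P.op θ = (θ ▷ t) ≫ (α_ g s t).hom
          ≫ (g ◁ (P.op ((λ_ s).inv) ≫ (λ_ u).hom)) := fun θ => P.key θ
    cases P with
    | mk op w bl =>
      simp only [LeftPastingOperator.mk.injEq]
      funext x f g θ
      exact (hk θ).symm
  · intro φ
    simp [Bicategory.Strict.leftUnitor_eqToIso, Bicategory.Strict.associator_eqToIso]
end

section
/- In a 2-category K, for a 2-cell η : 1_a ⇒ s : a → a, there is a bijection between right extension systems (s, η, (-)^s) on a — using right pasting operators K(a,y)(f, gs) → K(a,y)(fs, gs) — and monads (s, η, μ) on a, given by μ := (1_s)^s and θ^s := gμ · θs (for θ : f ⇒ gs : a → y). -/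
open CategoryTheory Bicategory

universe w v u

/-- A right extension system `(s, η, (-)^s)` on an object `a` of a 2-category: a right pasting
operator sending `θ : f ⇒ gs : a → y` to `θ^s : fs ⇒ gs`, with `η^s = 1_s`, `θ^s · fη = θ`
and `κ^s · θ^s = (κ^s θ)^s`. -/
structure RightExtensionSystem {K : Type u} [Bicategory.{w, v} K] [Bicategory.Strict K]
    {a : K} (s : a ⟶ a) (η : 𝟙 a ⟶ s) where
  ext : ∀ {y : K} {f g : a ⟶ y}, (f ⟶ s ≫ g) → (s ≫ f ⟶ s ≫ g)
  whisker : ∀ {y z : K} (h : y ⟶ z) {f g : a ⟶ y} (θ : f ⟶ s ≫ g),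
    ext ((θ ▷ h) ≫ (α_ s g h).hom)
      = (α_ s f h).inv ≫ (ext θ ▷ h) ≫ (α_ s g h).hom
  blister : ∀ {y : K} {f f' g : a ⟶ y} (κ : f' ⟶ f) (θ : f ⟶ s ≫ g),
    ext (κ ≫ θ) = (s ◁ κ) ≫ ext θ
  ext_η : ext (η ≫ (ρ_ s).inv) = 𝟙 (s ≫ 𝟙 a)
  η_ext : ∀ {y : K} {f g : a ⟶ y} (θ : f ⟶ s ≫ g),
    (λ_ f).inv ≫ (η ▷ f) ≫ ext θ = θ
  ext_ext : ∀ {y : K} {f g h : a ⟶ y} (θ : f ⟶ s ≫ g) (κ : g ⟶ s ≫ h),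
    ext θ ≫ ext κ = ext (θ ≫ ext κ)

namespace RightExtensionSystem

variable {K : Type u} [Bicategory.{w, v} K] [Bicategory.Strict K]
    {a : K} {s : a ⟶ a} {η : 𝟙 a ⟶ s}

attribute [local simp] Bicategory.Strict.associator_eqToIso
  Bicategory.Strict.leftUnitor_eqToIso Bicategory.Strict.rightUnitor_eqToIso

theorem ext_cast (E : RightExtensionSystem s η) {y : K} {f g g' : a ⟶ y} (eg : g = g')
    (θ : f ⟶ s ≫ g) :
    E.ext (θ ≫ eqToHom (by rw [eg])) = E.ext θ ≫ (eqToHom (by rw [eg]) : s ≫ g ⟶ s ≫ g') := by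
  cases eg; simp

/-- The multiplication `μ := (1_s)^s` of the induced monad. -/
def mu (E : RightExtensionSystem s η) : s ≫ s ⟶ s := E.ext ((ρ_ s).inv) ≫ (ρ_ s).hom

theorem ext_id (E : RightExtensionSystem s η) {y : K} (g : a ⟶ y) :
    E.ext (𝟙 (s ≫ g)) = (α_ s s g).inv ≫ (E.mu ▷ g) := by
  have h1 : ((ρ_ s).inv ▷ g) ≫ (α_ s (𝟙 a) g).hom
      = 𝟙 (s ≫ g) ≫ (eqToHom (by simp) : s ≫ g ⟶ s ≫ (𝟙 a ≫ g)) := by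
    simp
  have h2 := E.whisker g ((ρ_ s).inv)
  rw [h1, E.ext_cast (show g = 𝟙 a ≫ g by simp)] at h2
  simp only [mu, comp_whiskerRight, Category.assoc] at h2 ⊢
  simp at h2 ⊢
  rw [comp_eqToHom_iff] at h2
  rw [h2]
  simp

theorem ext_eq (E : RightExtensionSystem s η) {y : K} {f g : a ⟶ y} (θ : f ⟶ s ≫ g) :
    E.ext θ = (s ◁ θ) ≫ (α_ s s g).inv ≫ (E.mu ▷ g) := by
  have h := E.blister θ (𝟙 (s ≫ g))
  rw [Category.comp_id] at h
  rw [h, E.ext_id]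

theorem unit_left (E : RightExtensionSystem s η) :
    (λ_ s).inv ≫ (η ▷ s) ≫ E.mu = 𝟙 s := by
  have h := E.η_ext ((ρ_ s).inv)
  simp only [mu, ← Category.assoc] at h ⊢
  rw [h]
  simp

theorem unit_right (E : RightExtensionSystem s η) :
    (ρ_ s).inv ≫ (s ◁ η) ≫ E.mu = 𝟙 s := by
  have h := E.blister η ((ρ_ s).inv)
  rw [E.ext_η] at h
  simp only [mu, ← Category.assoc, ← h]
  simp

theorem assoc (E : RightExtensionSystem s η) :
    (E.mu ▷ s) ≫ E.mu = (α_ s s s).hom ≫ (s ◁ E.mu) ≫ E.mu := by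
  have k := E.ext_ext (𝟙 (s ≫ s)) ((ρ_ s).inv)
  rw [Category.id_comp, E.ext_id, E.ext_eq ((ρ_ s).inv), E.ext_eq] at k
  simp at k ⊢
  simp only [← Category.assoc] at k ⊢
  rw [cancel_mono] at k
  simp only [Category.assoc] at k
  rw [eqToHom_comp_iff] at k
  simpa using k

/-- The extension system associated to a monad `(s, η, μ)`. -/
def ofMonad (μ : s ≫ s ⟶ s)
    (h1 : (λ_ s).inv ≫ (η ▷ s) ≫ μ = 𝟙 s)
    (h2 : (ρ_ s).inv ≫ (s ◁ η) ≫ μ = 𝟙 s)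
    (h3 : (μ ▷ s) ≫ μ = (α_ s s s).hom ≫ (s ◁ μ) ≫ μ) :
    RightExtensionSystem s η where
  ext {y f g} θ := (s ◁ θ) ≫ (α_ s s g).inv ≫ (μ ▷ g)
  whisker h θ := by
    simp [Bicategory.whiskerRight_comp]
  blister κ θ := by simp
  ext_η := by
    simp at h2 ⊢
    simp only [← Category.assoc] at h2 ⊢
    rw [Category.assoc, eqToHom_comp_iff] at h2
    rw [h2]
    simp
  η_ext θ := by
    simp
    rw [← whisker_exchange_assoc]
    simp [Bicategory.whiskerRight_comp]
    rw [← comp_whiskerRight]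
    rw [Iso.inv_comp_eq] at h1
    rw [h1]
    simp
  ext_ext θ κ := by
    simp
    congr 1
    rw [← whisker_exchange_assoc]
    simp [Bicategory.whiskerRight_comp]
    rw [← comp_whiskerRight, h3]
    simp

theorem eq_of_ext {E₁ E₂ : RightExtensionSystem s η}
    (h : ∀ {y : K} (f g : a ⟶ y) (θ : f ⟶ s ≫ g), E₁.ext θ = E₂.ext θ) : E₁ = E₂ := by
  obtain ⟨e₁, _, _, _, _, _⟩ := E₁
  obtain ⟨e₂, _, _, _, _, _⟩ := E₂
  have he : @e₁ = @e₂ := by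
    funext y f g θ
    exact h f g θ
  subst he
  rfl

end RightExtensionSystem

/-- For a 2-cell `η : 1_a ⇒ s`, right extension systems `(s, η, (-)^s)` are in bijection with
monads `(s, η, μ)`, via `μ := (1_s)^s` and `θ^s := gμ · θs`. -/
theorem stmt13 {K : Type u} [Bicategory.{w, v} K] [Bicategory.Strict K]
    {a : K} (s : a ⟶ a) (η : 𝟙 a ⟶ s) :
    ∃ e : RightExtensionSystem s η ≃
      { μ : s ≫ s ⟶ s //
        (λ_ s).inv ≫ (η ▷ s) ≫ μ = 𝟙 s ∧
        (ρ_ s).inv ≫ (s ◁ η) ≫ μ = 𝟙 s ∧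
        (μ ▷ s) ≫ μ = (α_ s s s).hom ≫ (s ◁ μ) ≫ μ },
      (∀ E : RightExtensionSystem s η,
        (e E).val = E.ext ((ρ_ s).inv) ≫ (ρ_ s).hom) ∧
      (∀ (E : RightExtensionSystem s η) {y : K} {f g : a ⟶ y} (θ : f ⟶ s ≫ g),
        E.ext θ = (s ◁ θ) ≫ (α_ s s g).inv ≫ ((e E).val ▷ g)) := by
  refine ⟨⟨fun E => ⟨E.mu, E.unit_left, E.unit_right, E.assoc⟩,
    fun μ => RightExtensionSystem.ofMonad μ.1 μ.2.1 μ.2.2.1 μ.2.2.2, ?_, ?_⟩,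
    fun E => rfl, fun E {y f g} θ => E.ext_eq θ⟩
  · intro E
    exact RightExtensionSystem.eq_of_ext fun f g θ => (E.ext_eq θ).symm
  · intro μ
    refine Subtype.ext ?_
    simp [RightExtensionSystem.mu, RightExtensionSystem.ofMonad,
      Bicategory.Strict.associator_eqToIso, Bicategory.Strict.rightUnitor_eqToIso]
end

section
/- Let (c, s, η', μ') and (d, t, η, μ) be monads in a 2-category K and f : d → c a 1-cell. A 2-cell φ : sf ⇒ ft satisfies the Eilenberg–Moore-morphism axioms (φ · η'f = fη, and φ · μ'f = fμ · φt · sφ) if and only if φ satisfies φ · η'f = fη and, for every 2-cell θ : g ⇒ hs : c → y, the equation hφ · θ^s f = (hφ · θf)^t · gφ holds, where (-)^s and (-)^t are the right extension operators of s and t (θ^s := hμ' · θs, and for ρ : g ⇒ ht, ρ^t := hμ · ρt). -/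
open CategoryTheory Bicategory

universe w v u

/-- A 2-cell `φ : sf ⇒ ft` satisfies the Eilenberg–Moore-morphism axioms (EMU and EMM) iff
it satisfies EMU and the no-iteration condition `hφ · θ^s f = (hφ · θf)^t · gφ` for every
2-cell `θ : g ⇒ hs`, where `(-)^s` and `(-)^t` are the right extension operators. -/
theorem stmt15 {K : Type u} [Bicategory.{w, v} K] [Bicategory.Strict K]
    {c d : K} (s : c ⟶ c) (η' : 𝟙 c ⟶ s) (μ' : s ≫ s ⟶ s)
    (t : d ⟶ d) (η : 𝟙 d ⟶ t) (μ : t ≫ t ⟶ t)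
    (hη₁ : (λ_ s).inv ≫ (η' ▷ s) ≫ μ' = 𝟙 s)
    (hη₂ : (ρ_ s).inv ≫ (s ◁ η') ≫ μ' = 𝟙 s)
    (hμ'assoc : (μ' ▷ s) ≫ μ' = (α_ s s s).hom ≫ (s ◁ μ') ≫ μ')
    (hη₃ : (λ_ t).inv ≫ (η ▷ t) ≫ μ = 𝟙 t)
    (hη₄ : (ρ_ t).inv ≫ (t ◁ η) ≫ μ = 𝟙 t)
    (hμassoc : (μ ▷ t) ≫ μ = (α_ t t t).hom ≫ (t ◁ μ) ≫ μ)
    (f : d ⟶ c) (φ : f ≫ s ⟶ t ≫ f) :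
    (((ρ_ f).inv ≫ (f ◁ η') ≫ φ = (λ_ f).inv ≫ (η ▷ f)) ∧
      ((f ◁ μ') ≫ φ
        = (α_ f s s).inv ≫ (φ ▷ s) ≫ (α_ t f s).hom ≫ (t ◁ φ)
            ≫ (α_ t t f).inv ≫ (μ ▷ f))) ↔
    (((ρ_ f).inv ≫ (f ◁ η') ≫ φ = (λ_ f).inv ≫ (η ▷ f)) ∧
      (∀ {y : K} {g h : c ⟶ y} (θ : g ⟶ s ≫ h),
        (f ◁ ((s ◁ θ) ≫ (α_ s s h).inv ≫ (μ' ▷ h)))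
            ≫ (α_ f s h).inv ≫ (φ ▷ h) ≫ (α_ t f h).hom
          = (α_ f s g).inv ≫ (φ ▷ g) ≫ (α_ t f g).hom
            ≫ ((t ◁ ((f ◁ θ) ≫ (α_ f s h).inv ≫ (φ ▷ h) ≫ (α_ t f h).hom))
                ≫ (α_ t t (f ≫ h)).inv ≫ (μ ▷ (f ≫ h))))) := by
  constructor
  · rintro ⟨h1, h2⟩
    refine ⟨h1, ?_⟩
    intro y g h θ
    calc
      _ = f ◁ (s ◁ θ) ≫ f ◁ (α_ s s h).inv ≫ (α_ f (s ≫ s) h).inv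
            ≫ ((f ◁ μ' ≫ φ) ▷ h) ≫ (α_ t f h).hom := by bicategory
      _ = f ◁ (s ◁ θ) ≫ f ◁ (α_ s s h).inv ≫ (α_ f (s ≫ s) h).inv
            ≫ (((α_ f s s).inv ≫ (φ ▷ s) ≫ (α_ t f s).hom ≫ (t ◁ φ)
              ≫ (α_ t t f).inv ≫ (μ ▷ f)) ▷ h) ≫ (α_ t f h).hom := by rw [h2]
      _ = (α_ f s g).inv ≫ ((f ≫ s) ◁ θ ≫ φ ▷ (s ≫ h))
            ≫ (α_ t f (s ≫ h)).hom ≫ t ◁ (α_ f s h).inv ≫ t ◁ (φ ▷ h)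
            ≫ t ◁ (α_ t f h).hom ≫ (α_ t t (f ≫ h)).inv ≫ μ ▷ (f ≫ h) := by
          bicategory
      _ = (α_ f s g).inv ≫ (φ ▷ g ≫ (t ≫ f) ◁ θ)
            ≫ (α_ t f (s ≫ h)).hom ≫ t ◁ (α_ f s h).inv ≫ t ◁ (φ ▷ h)
            ≫ t ◁ (α_ t f h).hom ≫ (α_ t t (f ≫ h)).inv ≫ μ ▷ (f ≫ h) := by
          rw [whisker_exchange]
      _ = _ := by bicategory
  · rintro ⟨h1, key⟩
    refine ⟨h1, ?_⟩
    have k := key (y := c) (g := s) (h := 𝟙 c) (ρ_ s).inv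
    calc
      (f ◁ μ') ≫ φ
          = ((f ◁ ((s ◁ (ρ_ s).inv) ≫ (α_ s s (𝟙 c)).inv ≫ (μ' ▷ 𝟙 c)))
              ≫ (α_ f s (𝟙 c)).inv ≫ (φ ▷ 𝟙 c) ≫ (α_ t f (𝟙 c)).hom)
              ≫ t ◁ (ρ_ f).hom := by bicategory
      _ = ((α_ f s s).inv ≫ (φ ▷ s) ≫ (α_ t f s).hom
              ≫ ((t ◁ ((f ◁ (ρ_ s).inv) ≫ (α_ f s (𝟙 c)).inv ≫ (φ ▷ 𝟙 c)
                    ≫ (α_ t f (𝟙 c)).hom))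
                  ≫ (α_ t t (f ≫ 𝟙 c)).inv ≫ (μ ▷ (f ≫ 𝟙 c))))
              ≫ t ◁ (ρ_ f).hom := by rw [k]
      _ = _ := by bicategory
end

section
/- Let (s, η', μ') and (t, η, μ) be monads on an object a of a 2-category K. There is a bijective correspondence between distributive laws λ : st ⇒ ts of s over t (compatible with both units and multiplications) and 2-cells λ : st ⇒ ts such that: (1) λ · sη = ηs and λ · η't = tη'; (2) for every 2-cell θ : f ⇒ tg : x → a, λg · sθ^t = (λg · sθ)^t · λf, where θ^t := μg · tθ; (3) for every 2-cell κ : h ⇒ ks : a → y, kλ · κ^s t = (kλ · κt)^s · hλ, where κ^s := kμ' · κs. -/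
open CategoryTheory Bicategory

universe w v u

section Aux

variable {K : Type u} [Bicategory.{w, v} K] [Bicategory.Strict K]
    {a : K} (s t : a ⟶ a)

/-- Forward direction for the left `t`-extension condition. -/
theorem stmt18_aux_fwd_t (μ : t ≫ t ⟶ t) (l : t ≫ s ⟶ s ≫ t)
    (h : (μ ▷ s) ≫ l
          = (α_ t t s).hom ≫ (t ◁ l) ≫ (α_ t s t).inv ≫ (l ▷ t)
              ≫ (α_ s t t).hom ≫ (s ◁ μ))
    {x : K} {f g : x ⟶ a} (θ : f ⟶ g ≫ t) :
    ((((θ ▷ t) ≫ (α_ g t t).hom ≫ (g ◁ μ)) ▷ s) ≫ (α_ g t s).hom ≫ (g ◁ l)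
      = (α_ f t s).hom ≫ (f ◁ l) ≫ (α_ f s t).inv
        ≫ ((((θ ▷ s) ≫ (α_ g t s).hom ≫ (g ◁ l) ≫ (α_ g s t).inv) ▷ t)
            ≫ (α_ (g ≫ s) t t).hom ≫ ((g ≫ s) ◁ μ))
        ≫ (α_ g s t).hom) := by
  calc ((((θ ▷ t) ≫ (α_ g t t).hom ≫ (g ◁ μ)) ▷ s) ≫ (α_ g t s).hom ≫ (g ◁ l))
      = ((θ ▷ t) ▷ s) ≫ ((α_ g t t).hom ▷ s) ≫ (α_ g (t ≫ t) s).hom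
          ≫ (g ◁ ((μ ▷ s) ≫ l)) := by bicategory
    _ = ((θ ▷ t) ▷ s) ≫ ((α_ g t t).hom ▷ s) ≫ (α_ g (t ≫ t) s).hom
          ≫ (g ◁ ((α_ t t s).hom ≫ (t ◁ l) ≫ (α_ t s t).inv ≫ (l ▷ t)
              ≫ (α_ s t t).hom ≫ (s ◁ μ))) := by rw [h]
    _ = (α_ f t s).hom ≫ ((θ ▷ (t ≫ s)) ≫ ((g ≫ t) ◁ l))
          ≫ (α_ g t (s ≫ t)).hom
          ≫ (g ◁ ((α_ t s t).inv ≫ (l ▷ t) ≫ (α_ s t t).hom ≫ (s ◁ μ))) := by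
        bicategory
    _ = (α_ f t s).hom ≫ ((f ◁ l) ≫ (θ ▷ (s ≫ t)))
          ≫ (α_ g t (s ≫ t)).hom
          ≫ (g ◁ ((α_ t s t).inv ≫ (l ▷ t) ≫ (α_ s t t).hom ≫ (s ◁ μ))) := by
        rw [whisker_exchange]
    _ = _ := by bicategory

/-- Backward direction for the left `t`-extension condition. -/
theorem stmt18_aux_bwd_t (μ : t ≫ t ⟶ t) (l : t ≫ s ⟶ s ≫ t)
    (h : ∀ {x : K} {f g : x ⟶ a} (θ : f ⟶ g ≫ t),
      ((((θ ▷ t) ≫ (α_ g t t).hom ≫ (g ◁ μ)) ▷ s) ≫ (α_ g t s).hom ≫ (g ◁ l)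
        = (α_ f t s).hom ≫ (f ◁ l) ≫ (α_ f s t).inv
          ≫ ((((θ ▷ s) ≫ (α_ g t s).hom ≫ (g ◁ l) ≫ (α_ g s t).inv) ▷ t)
              ≫ (α_ (g ≫ s) t t).hom ≫ ((g ≫ s) ◁ μ))
          ≫ (α_ g s t).hom)) :
    (μ ▷ s) ≫ l
      = (α_ t t s).hom ≫ (t ◁ l) ≫ (α_ t s t).inv ≫ (l ▷ t)
          ≫ (α_ s t t).hom ≫ (s ◁ μ) := by
  have spec := h (x := a) (f := t) (g := 𝟙 a) (λ_ t).inv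
  calc (μ ▷ s) ≫ l
      = (((((λ_ t).inv ▷ t) ≫ (α_ (𝟙 a) t t).hom ≫ ((𝟙 a) ◁ μ)) ▷ s)
          ≫ (α_ (𝟙 a) t s).hom ≫ ((𝟙 a) ◁ l)) ≫ (λ_ (s ≫ t)).hom := by bicategory
    _ = ((α_ t t s).hom ≫ (t ◁ l) ≫ (α_ t s t).inv
          ≫ (((((λ_ t).inv ▷ s) ≫ (α_ (𝟙 a) t s).hom ≫ ((𝟙 a) ◁ l) ≫ (α_ (𝟙 a) s t).inv) ▷ t)
              ≫ (α_ ((𝟙 a) ≫ s) t t).hom ≫ (((𝟙 a) ≫ s) ◁ μ))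
          ≫ (α_ (𝟙 a) s t).hom) ≫ (λ_ (s ≫ t)).hom := by
        rw [spec]
    _ = _ := by bicategory

/-- Forward direction for the right `s`-extension condition. -/
theorem stmt18_aux_fwd_s (μ' : s ≫ s ⟶ s) (l : t ≫ s ⟶ s ≫ t)
    (h : (t ◁ μ') ≫ l
          = (α_ t s s).inv ≫ (l ▷ s) ≫ (α_ s t s).hom ≫ (s ◁ l)
              ≫ (α_ s s t).inv ≫ (μ' ▷ t))
    {y : K} {h' k : a ⟶ y} (κ : h' ⟶ s ≫ k) :
    ((t ◁ ((s ◁ κ) ≫ (α_ s s k).inv ≫ (μ' ▷ k)))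
        ≫ (α_ t s k).inv ≫ (l ▷ k) ≫ (α_ s t k).hom
      = (α_ t s h').inv ≫ (l ▷ h') ≫ (α_ s t h').hom
        ≫ ((s ◁ ((t ◁ κ) ≫ (α_ t s k).inv ≫ (l ▷ k) ≫ (α_ s t k).hom))
            ≫ (α_ s s (t ≫ k)).inv ≫ (μ' ▷ (t ≫ k)))) := by
  calc ((t ◁ ((s ◁ κ) ≫ (α_ s s k).inv ≫ (μ' ▷ k)))
        ≫ (α_ t s k).inv ≫ (l ▷ k) ≫ (α_ s t k).hom)
      = (t ◁ (s ◁ κ)) ≫ (t ◁ (α_ s s k).inv) ≫ (α_ t (s ≫ s) k).inv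
          ≫ (((t ◁ μ') ≫ l) ▷ k) ≫ (α_ s t k).hom := by bicategory
    _ = (t ◁ (s ◁ κ)) ≫ (t ◁ (α_ s s k).inv) ≫ (α_ t (s ≫ s) k).inv
          ≫ (((α_ t s s).inv ≫ (l ▷ s) ≫ (α_ s t s).hom ≫ (s ◁ l)
              ≫ (α_ s s t).inv ≫ (μ' ▷ t)) ▷ k) ≫ (α_ s t k).hom := by rw [h]
    _ = (α_ t s h').inv ≫ (((t ≫ s) ◁ κ) ≫ (l ▷ (s ≫ k)))
          ≫ (α_ s t (s ≫ k)).hom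
          ≫ (s ◁ ((α_ t s k).inv ≫ (l ▷ k) ≫ (α_ s t k).hom))
          ≫ (α_ s s (t ≫ k)).inv ≫ (μ' ▷ (t ≫ k)) := by bicategory
    _ = (α_ t s h').inv ≫ ((l ▷ h') ≫ ((s ≫ t) ◁ κ))
          ≫ (α_ s t (s ≫ k)).hom
          ≫ (s ◁ ((α_ t s k).inv ≫ (l ▷ k) ≫ (α_ s t k).hom))
          ≫ (α_ s s (t ≫ k)).inv ≫ (μ' ▷ (t ≫ k)) := by rw [whisker_exchange]
    _ = _ := by bicategory

/-- Backward direction for the right `s`-extension condition. -/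
theorem stmt18_aux_bwd_s (μ' : s ≫ s ⟶ s) (l : t ≫ s ⟶ s ≫ t)
    (h : ∀ {y : K} {h' k : a ⟶ y} (κ : h' ⟶ s ≫ k),
      ((t ◁ ((s ◁ κ) ≫ (α_ s s k).inv ≫ (μ' ▷ k)))
          ≫ (α_ t s k).inv ≫ (l ▷ k) ≫ (α_ s t k).hom
        = (α_ t s h').inv ≫ (l ▷ h') ≫ (α_ s t h').hom
          ≫ ((s ◁ ((t ◁ κ) ≫ (α_ t s k).inv ≫ (l ▷ k) ≫ (α_ s t k).hom))
              ≫ (α_ s s (t ≫ k)).inv ≫ (μ' ▷ (t ≫ k))))) :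
    (t ◁ μ') ≫ l
      = (α_ t s s).inv ≫ (l ▷ s) ≫ (α_ s t s).hom ≫ (s ◁ l)
          ≫ (α_ s s t).inv ≫ (μ' ▷ t) := by
  have spec := h (y := a) (h' := s) (k := 𝟙 a) (ρ_ s).inv
  calc (t ◁ μ') ≫ l
      = ((t ◁ ((s ◁ (ρ_ s).inv) ≫ (α_ s s (𝟙 a)).inv ≫ (μ' ▷ (𝟙 a))))
          ≫ (α_ t s (𝟙 a)).inv ≫ (l ▷ (𝟙 a)) ≫ (α_ s t (𝟙 a)).hom)
          ≫ (s ◁ (ρ_ t).hom) := by bicategory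
    _ = ((α_ t s s).inv ≫ (l ▷ s) ≫ (α_ s t s).hom
          ≫ ((s ◁ ((t ◁ (ρ_ s).inv) ≫ (α_ t s (𝟙 a)).inv ≫ (l ▷ (𝟙 a)) ≫ (α_ s t (𝟙 a)).hom))
              ≫ (α_ s s (t ≫ 𝟙 a)).inv ≫ (μ' ▷ (t ≫ 𝟙 a))))
          ≫ (s ◁ (ρ_ t).hom) := by rw [spec]
    _ = _ := by bicategory

end Aux

/-- Bijective correspondence between distributive laws `λ : st ⇒ ts` of a monad `s` over a
monad `t` on an object `a` of a 2-category and no-iteration distributive laws: 2-cells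
`λ : st ⇒ ts` compatible with both units, with the left `t`-extension operator and with the
right `s`-extension operator. -/
theorem stmt18 {K : Type u} [Bicategory.{w, v} K] [Bicategory.Strict K]
    {a : K} (s : a ⟶ a) (η' : 𝟙 a ⟶ s) (μ' : s ≫ s ⟶ s)
    (t : a ⟶ a) (η : 𝟙 a ⟶ t) (μ : t ≫ t ⟶ t)
    (hη₁ : (λ_ s).inv ≫ (η' ▷ s) ≫ μ' = 𝟙 s)
    (hη₂ : (ρ_ s).inv ≫ (s ◁ η') ≫ μ' = 𝟙 s)
    (hμ'assoc : (μ' ▷ s) ≫ μ' = (α_ s s s).hom ≫ (s ◁ μ') ≫ μ')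
    (hη₃ : (λ_ t).inv ≫ (η ▷ t) ≫ μ = 𝟙 t)
    (hη₄ : (ρ_ t).inv ≫ (t ◁ η) ≫ μ = 𝟙 t)
    (hμassoc : (μ ▷ t) ≫ μ = (α_ t t t).hom ≫ (t ◁ μ) ≫ μ) :
    ∃ e :
      { l : t ≫ s ⟶ s ≫ t //
        ((λ_ s).inv ≫ (η ▷ s) ≫ l = (ρ_ s).inv ≫ (s ◁ η)) ∧
        ((ρ_ t).inv ≫ (t ◁ η') ≫ l = (λ_ t).inv ≫ (η' ▷ t)) ∧
        ((μ ▷ s) ≫ l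
          = (α_ t t s).hom ≫ (t ◁ l) ≫ (α_ t s t).inv ≫ (l ▷ t)
              ≫ (α_ s t t).hom ≫ (s ◁ μ)) ∧
        ((t ◁ μ') ≫ l
          = (α_ t s s).inv ≫ (l ▷ s) ≫ (α_ s t s).hom ≫ (s ◁ l)
              ≫ (α_ s s t).inv ≫ (μ' ▷ t)) } ≃
      { l : t ≫ s ⟶ s ≫ t //
        ((λ_ s).inv ≫ (η ▷ s) ≫ l = (ρ_ s).inv ≫ (s ◁ η)) ∧
        ((ρ_ t).inv ≫ (t ◁ η') ≫ l = (λ_ t).inv ≫ (η' ▷ t)) ∧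
        (∀ {x : K} {f g : x ⟶ a} (θ : f ⟶ g ≫ t),
          ((((θ ▷ t) ≫ (α_ g t t).hom ≫ (g ◁ μ)) ▷ s) ≫ (α_ g t s).hom ≫ (g ◁ l)
            = (α_ f t s).hom ≫ (f ◁ l) ≫ (α_ f s t).inv
              ≫ ((((θ ▷ s) ≫ (α_ g t s).hom ≫ (g ◁ l) ≫ (α_ g s t).inv) ▷ t)
                  ≫ (α_ (g ≫ s) t t).hom ≫ ((g ≫ s) ◁ μ))
              ≫ (α_ g s t).hom)) ∧
        (∀ {y : K} {h k : a ⟶ y} (κ : h ⟶ s ≫ k),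
          ((t ◁ ((s ◁ κ) ≫ (α_ s s k).inv ≫ (μ' ▷ k)))
              ≫ (α_ t s k).inv ≫ (l ▷ k) ≫ (α_ s t k).hom
            = (α_ t s h).inv ≫ (l ▷ h) ≫ (α_ s t h).hom
              ≫ ((s ◁ ((t ◁ κ) ≫ (α_ t s k).inv ≫ (l ▷ k) ≫ (α_ s t k).hom))
                  ≫ (α_ s s (t ≫ k)).inv ≫ (μ' ▷ (t ≫ k))))) },
      ∀ p, (e p).val = p.val := by
  refine ⟨⟨fun p => ⟨p.1, p.2.1, p.2.2.1,
      fun θ => stmt18_aux_fwd_t s t μ p.1 p.2.2.2.1 θ,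
      fun κ => stmt18_aux_fwd_s s t μ' p.1 p.2.2.2.2 κ⟩,
    fun p => ⟨p.1, p.2.1, p.2.2.1,
      stmt18_aux_bwd_t s t μ p.1 p.2.2.2.1,
      stmt18_aux_bwd_s s t μ' p.1 p.2.2.2.2⟩,
    fun p => rfl, fun p => rfl⟩, fun p => rfl⟩
end

section
/- Let (s, η', μ') and (t, η, μ) be monads on an object a of a 2-category K and λ : st ⇒ ts a 2-cell satisfying λ · sη = ηs, λ · η't = tη', and conditions (2) and (3) of a no-iteration distributive law (λg · sθ^t = (λg · sθ)^t · λf for θ : f ⇒ tg, and kλ · κ^s t = (kλ · κt)^s · hλ for κ : h ⇒ ks). Then λ is compatible with both multiplications: λ · sμ = μs · tλ · λt and λ · μ't = tμ' · λs · sλ; in particular, applying condition (2) with θ = 1_t yields the first, and condition (3) with κ = 1_s yields the second. -/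
open CategoryTheory Bicategory

universe w v u

/-- A 2-cell `λ : st ⇒ ts` compatible with both units and satisfying conditions (2) and (3)
of a no-iteration distributive law is compatible with both multiplications:
`λ · sμ = μs · tλ · λt` and `λ · μ't = tμ' · λs · sλ`. -/
theorem stmt19 {K : Type u} [Bicategory.{w, v} K] [Bicategory.Strict K]
    {a : K} (s : a ⟶ a) (η' : 𝟙 a ⟶ s) (μ' : s ≫ s ⟶ s)
    (t : a ⟶ a) (η : 𝟙 a ⟶ t) (μ : t ≫ t ⟶ t)
    (hη₁ : (λ_ s).inv ≫ (η' ▷ s) ≫ μ' = 𝟙 s)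
    (hη₂ : (ρ_ s).inv ≫ (s ◁ η') ≫ μ' = 𝟙 s)
    (hμ'assoc : (μ' ▷ s) ≫ μ' = (α_ s s s).hom ≫ (s ◁ μ') ≫ μ')
    (hη₃ : (λ_ t).inv ≫ (η ▷ t) ≫ μ = 𝟙 t)
    (hη₄ : (ρ_ t).inv ≫ (t ◁ η) ≫ μ = 𝟙 t)
    (hμassoc : (μ ▷ t) ≫ μ = (α_ t t t).hom ≫ (t ◁ μ) ≫ μ)
    (l : t ≫ s ⟶ s ≫ t)
    (hu : ((λ_ s).inv ≫ (η ▷ s) ≫ l = (ρ_ s).inv ≫ (s ◁ η)) ∧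
        ((ρ_ t).inv ≫ (t ◁ η') ≫ l = (λ_ t).inv ≫ (η' ▷ t)))
    (h2 : ∀ {x : K} {f g : x ⟶ a} (θ : f ⟶ g ≫ t),
          ((((θ ▷ t) ≫ (α_ g t t).hom ≫ (g ◁ μ)) ▷ s) ≫ (α_ g t s).hom ≫ (g ◁ l)
            = (α_ f t s).hom ≫ (f ◁ l) ≫ (α_ f s t).inv
              ≫ ((((θ ▷ s) ≫ (α_ g t s).hom ≫ (g ◁ l) ≫ (α_ g s t).inv) ▷ t)
                  ≫ (α_ (g ≫ s) t t).hom ≫ ((g ≫ s) ◁ μ))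
              ≫ (α_ g s t).hom))
    (h3 : ∀ {y : K} {h k : a ⟶ y} (κ : h ⟶ s ≫ k),
          ((t ◁ ((s ◁ κ) ≫ (α_ s s k).inv ≫ (μ' ▷ k)))
              ≫ (α_ t s k).inv ≫ (l ▷ k) ≫ (α_ s t k).hom
            = (α_ t s h).inv ≫ (l ▷ h) ≫ (α_ s t h).hom
              ≫ ((s ◁ ((t ◁ κ) ≫ (α_ t s k).inv ≫ (l ▷ k) ≫ (α_ s t k).hom))
                  ≫ (α_ s s (t ≫ k)).inv ≫ (μ' ▷ (t ≫ k))))) :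
    ((μ ▷ s) ≫ l
          = (α_ t t s).hom ≫ (t ◁ l) ≫ (α_ t s t).inv ≫ (l ▷ t)
              ≫ (α_ s t t).hom ≫ (s ◁ μ)) ∧
    ((t ◁ μ') ≫ l
          = (α_ t s s).inv ≫ (l ▷ s) ≫ (α_ s t s).hom ≫ (s ◁ l)
              ≫ (α_ s s t).inv ≫ (μ' ▷ t)) := by
  constructor
  · have H := h2 ((λ_ t).inv)
    rw [← cancel_mono (λ_ (s ≫ t)).inv]
    simpa using H
  · have H := h3 ((ρ_ s).inv)
    rw [← cancel_mono (ρ_ (s ≫ t)).inv, ← cancel_mono (α_ s t (𝟙 a)).hom]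
    simpa using H
end
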